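/- A graph G is (k,ℓ)-sparse, where k ≥ 1 and 0 ≤ ℓ ≤ 2k−1, if and only if G is a (k,ℓ)-pebble-game graph, i.e., G can be constructed by the (k,ℓ)-pebble game with colors. -/

import Mathlib

open scoped Classical

namespace PebbleGame

/-- A configuration of the `(k,ℓ)`-pebble game with colors: a directed multigraph
whose edges are records `(tail, head, color)` (the color of an edge is the color of
the unique pebble lying on it), together with the multiset of colors of the pebbles
sitting on each vertex. -/
structure PGConfig (V : Type) (k : ℕ) where
  edges : Multiset (V × V × Fin k)
  pebs : V → Multiset (Fin k)

variable {V : Type} [DecidableEq V] {k ℓ : ℕ}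

/-- The configuration resulting from an add-edge move: a pebble of color `c` is picked
up from `v`, the directed edge `vw` is added and the pebble is placed on it. -/
def addEdgeCfg (H : PGConfig V k) (v w : V) (c : Fin k) : PGConfig V k :=
  ⟨(v, w, c) ::ₘ H.edges, Function.update H.pebs v ((H.pebs v).erase c)⟩

/-- The configuration resulting from a pebble-slide move along the edge `(v, w, c)`,
using a pebble of color `c'` on `w`: the edge `vw` is replaced by `wv`, the pebble of
color `c` that was on the edge goes to `v`, and the pebble of color `c'` from `w` is
placed on the new edge `wv`. -/
def slideCfg (H : PGConfig V k) (v w : V) (c c' : Fin k) : PGConfig V k :=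
  ⟨(w, v, c') ::ₘ H.edges.erase (v, w, c),
    Function.update (Function.update H.pebs w ((H.pebs w).erase c')) v
      (c ::ₘ Function.update H.pebs w ((H.pebs w).erase c') v)⟩

/-- A legal move of the `(k,ℓ)`-pebble game with colors. -/
inductive Step (k ℓ : ℕ) : PGConfig V k → PGConfig V k → Prop
  | add (H : PGConfig V k) (v w : V) (c : Fin k)
      (hpeb : ℓ + 1 ≤ ∑ u ∈ ({v, w} : Finset V), (H.pebs u).card)
      (hc : c ∈ H.pebs v) :
      Step k ℓ H (addEdgeCfg H v w c)
  | slide (H : PGConfig V k) (v w : V) (c c' : Fin k)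
      (he : (v, w, c) ∈ H.edges)
      (hc : c' ∈ H.pebs w) :
      Step k ℓ H (slideCfg H v w c c')

/-- The initial configuration: no edges, and one pebble of each of the `k` colors on
every vertex. -/
def initCfg (V : Type) [DecidableEq V] [Fintype V] (k : ℕ) : PGConfig V k :=
  ⟨0, fun _ => Finset.univ.val⟩

/-- A configuration is reachable if it arises from the initial configuration by a
finite sequence of legal moves. -/
def Reachable [Fintype V] (k ℓ : ℕ) (H : PGConfig V k) : Prop :=
  Relation.ReflTransGen (Step k ℓ) (initCfg V k) H

/-- The underlying undirected multigraph (multiset of edges) of a configuration. -/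
def undirected (H : PGConfig V k) : Multiset (Sym2 V) :=
  H.edges.map fun e => s(e.1, e.2.1)

/-- The (undirected) edges of a configuration carrying a pebble of color `c`. -/
def monoEdges (H : PGConfig V k) (c : Fin k) : Multiset (Sym2 V) :=
  (H.edges.filter fun e => e.2.2 = c).map fun e => s(e.1, e.2.1)

/-- The undirected edges of color `c` among a multiset `F` of directed colored
edges. -/
def monoOf (F : Multiset (V × V × Fin k)) (c : Fin k) : Multiset (Sym2 V) :=
  (F.filter fun e => e.2.2 = c).map fun e => s(e.1, e.2.1)

/-- `G` (a multiset of undirected edges on the fixed finite vertex set `V`) is a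
`(k,ℓ)`-pebble-game graph if it is the underlying undirected multigraph of some
reachable configuration. -/
def PebbleGameGraph [Fintype V] (k ℓ : ℕ) (E : Multiset (Sym2 V)) : Prop :=
  ∃ H : PGConfig V k, Reachable k ℓ H ∧ undirected H = E

/-- The edges of `E` spanned by the vertex set `S` (both endpoints in `S`). -/
def spanned (E : Multiset (Sym2 V)) (S : Finset V) : Multiset (Sym2 V) :=
  E.filter fun e => e ∈ S.sym2

/-- A multigraph is `(k,ℓ)`-sparse if every nonempty set of `n'` vertices spans at
most `k n' - ℓ` edges. -/
def Sparse (k ℓ : ℕ) (E : Multiset (Sym2 V)) : Prop :=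
  ∀ S : Finset V, S.Nonempty → (spanned E S).card ≤ k * S.card - ℓ

/-- A multigraph is `(k,ℓ)`-tight if it is `(k,ℓ)`-sparse with exactly `k|V| - ℓ`
edges. -/
def Tight [Fintype V] (k ℓ : ℕ) (E : Multiset (Sym2 V)) : Prop :=
  Sparse k ℓ E ∧ E.card = k * Fintype.card V - ℓ

/-- Connectivity (as undirected multigraphs) via the edges of `F`. -/
def Conn (F : Multiset (Sym2 V)) : V → V → Prop :=
  Relation.ReflTransGen fun a b => s(a, b) ∈ F

/-- The connected components of the graph with vertex set `S` and edge multiset `F`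
(whose edges are assumed to be spanned by `S`), as a finset of vertex sets. -/
noncomputable def components (S : Finset V) (F : Multiset (Sym2 V)) : Finset (Finset V) :=
  S.image fun v => S.filter fun u => Conn F v u

/-- The tree-pieces of the graph `(S, F)`: connected components that contain no cycle,
i.e. whose spanned edge count is exactly one less than their vertex count (an isolated
vertex is a tree-piece). -/
noncomputable def treePieces (S : Finset V) (F : Multiset (Sym2 V)) : Finset (Finset V) :=
  (components S F).filter fun C => (spanned F C).card + 1 = C.card

/-- The number of tree-pieces of the graph `(S, F)`. -/
noncomputable def treePieceCount (S : Finset V) (F : Multiset (Sym2 V)) : ℕ :=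
  (treePieces S F).card

/-- A multigraph contains a cycle iff some nonempty vertex set spans at least as many
edges as it has vertices. -/
def HasCycle (F : Multiset (Sym2 V)) : Prop :=
  ∃ S : Finset V, S.Nonempty ∧ S.card ≤ (spanned F S).card

/-- A spanning tree on the whole (finite) vertex set: connected with `|V| - 1` edges. -/
def IsSpanningTree [Fintype V] (T : Multiset (Sym2 V)) : Prop :=
  (∀ u v : V, Conn T u v) ∧ T.card + 1 = Fintype.card V

/-- A spanning map-graph: the edges admit an orientation in which every vertex has
out-degree exactly one. -/
def IsSpanningMapGraph [Fintype V] (T : Multiset (Sym2 V)) : Prop :=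
  ∃ M : Multiset (V × V), M.map (fun p => s(p.1, p.2)) = T ∧
    ∀ v : V, (M.filter fun p => p.1 = v).card = 1

/-- A `(k,ℓ)`-maps-and-trees decomposition: `ℓ` edge-disjoint spanning trees and
`k - ℓ` edge-disjoint spanning map-graphs whose union is `E`. -/
def MapsAndTrees [Fintype V] (k ℓ : ℕ) (E : Multiset (Sym2 V)) : Prop :=
  ∃ (T : Fin ℓ → Multiset (Sym2 V)) (M : Fin (k - ℓ) → Multiset (Sym2 V)),
    ((∑ i, T i) + ∑ j, M j) = E ∧ (∀ i, IsSpanningTree (T i)) ∧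
      ∀ j, IsSpanningMapGraph (M j)

/-- `(S, T)` is a (possibly single-vertex) tree: nonempty vertex set `S`, edges spanned
by `S`, connected on `S`, and `|T| + 1 = |S|`. -/
def IsTreeOn (S : Finset V) (T : Multiset (Sym2 V)) : Prop :=
  S.Nonempty ∧ (∀ e ∈ T, e ∈ S.sym2) ∧ (∀ u ∈ S, ∀ v ∈ S, Conn T u v) ∧
    T.card + 1 = S.card

/-- An `ℓTk` decomposition of `E`: `ℓ` edge-disjoint (not necessarily spanning,
possibly single-vertex) trees `(S i, T i)` whose edges partition `E`, such that every
vertex belongs to exactly `k` of the trees. -/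
def LTkDecomp (k ℓ : ℕ) (E : Multiset (Sym2 V)) (S : Fin ℓ → Finset V)
    (T : Fin ℓ → Multiset (Sym2 V)) : Prop :=
  (∑ i, T i) = E ∧ (∀ i, IsTreeOn (S i) (T i)) ∧
    ∀ v : V, (Finset.univ.filter fun i => v ∈ S i).card = k

/-- A proper `ℓTk`: an `ℓTk` decomposition such that every nonempty subgraph
(vertex set `U`, together with a sub-multiset `F i` of each tree spanned by `U`)
contains at least `ℓ` tree-pieces, the tree-pieces being the connected components of
the intersections of the trees with the subgraph. -/
def ProperLTk (k ℓ : ℕ) (E : Multiset (Sym2 V)) : Prop :=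
  ∃ (S : Fin ℓ → Finset V) (T : Fin ℓ → Multiset (Sym2 V)),
    LTkDecomp k ℓ E S T ∧
      ∀ U : Finset V, U.Nonempty →
        ∀ F : Fin ℓ → Multiset (Sym2 V),
          (∀ i, F i ≤ T i) → (∀ i, ∀ e ∈ F i, e ∈ U.sym2) →
            ℓ ≤ ∑ i, treePieceCount (U ∩ S i) (F i)

/-- One pebble-slide move (as a relation between configurations). -/
def SlideRel (k : ℕ) (A B : PGConfig V k) : Prop :=
  ∃ (v w : V) (c c' : Fin k), (v, w, c) ∈ A.edges ∧ c' ∈ A.pebs w ∧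
    B = slideCfg A v w c c'

/-- A canonical move of the `(k,ℓ)`-pebble game with colors: add-edge moves cover the
new edge with a color present on both endpoints if one exists, and otherwise with the
highest-numbered color present; pebble-slide moves never create a monochromatic
cycle. -/
inductive CanStep (k ℓ : ℕ) : PGConfig V k → PGConfig V k → Prop
  | add (H : PGConfig V k) (v w : V) (c : Fin k)
      (hpeb : ℓ + 1 ≤ ∑ u ∈ ({v, w} : Finset V), (H.pebs u).card)
      (hc : c ∈ H.pebs v)
      (hcanon : c ∈ H.pebs w ∨
        ((∀ c' : Fin k, c' ∈ H.pebs v → c' ∉ H.pebs w) ∧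
          ∀ c' : Fin k, (c' ∈ H.pebs v ∨ c' ∈ H.pebs w) → c' ≤ c)) :
      CanStep k ℓ H (addEdgeCfg H v w c)
  | slide (H : PGConfig V k) (v w : V) (c c' : Fin k)
      (he : (v, w, c) ∈ H.edges)
      (hc : c' ∈ H.pebs w)
      (hnocycle : ∀ i : Fin k,
        HasCycle (monoEdges (slideCfg H v w c c') i) → HasCycle (monoEdges H i)) :
      CanStep k ℓ H (slideCfg H v w c c')

/-- The graph obtained from a configuration by replacing every pebble lying on a
vertex by a loop at that vertex. -/
def withLoops [Fintype V] (H : PGConfig V k) : Multiset (Sym2 V) :=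
  undirected H + Finset.univ.val.bind fun v => Multiset.replicate (H.pebs v).card s(v, v)

end PebbleGame
open PebbleGame

namespace PebbleGame

variable {V : Type} [DecidableEq V] {k ℓ : ℕ}

/-- Out-degree of a vertex in a configuration. -/
noncomputable def outdeg (H : PGConfig V k) (v : V) : ℕ :=
  (H.edges.filter fun e => e.1 = v).card

/-- Per-vertex invariant: pebbles plus out-degree equals `k`. -/
def Good (k : ℕ) (H : PGConfig V k) : Prop :=
  ∀ v, (H.pebs v).card + outdeg H v = k

lemma card_pos_of_mem {s : Multiset (Fin k)} {a : Fin k} (h : a ∈ s) : 1 ≤ s.card :=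
  Multiset.card_pos.mpr (fun h0 => by simp [h0] at h)

lemma ite_flip (a b : V) : (if a = b then (1:ℕ) else 0) = if b = a then 1 else 0 := by
  by_cases h : a = b
  · simp [h]
  · rw [if_neg h, if_neg (fun hh => h hh.symm)]

lemma slide_pebs_card (H : PGConfig V k) {w : V} (v : V) (c : Fin k) {c' : Fin k}
    (hc : c' ∈ H.pebs w) (u : V) :
    ((slideCfg H v w c c').pebs u).card + (if u = w then 1 else 0) =
      (H.pebs u).card + (if u = v then 1 else 0) := by
  have hle : 1 ≤ (H.pebs w).card := card_pos_of_mem hc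
  have hcard : ((H.pebs w).erase c').card + 1 = (H.pebs w).card := by
    rw [Multiset.card_erase_of_mem hc, Nat.pred_eq_sub_one]; omega
  simp only [slideCfg]
  by_cases huv : u = v
  · subst huv
    rw [Function.update_self]
    by_cases huw : u = w
    · subst huw
      rw [Function.update_self]
      simp only [Multiset.card_cons, if_pos rfl]
      omega
    · rw [Function.update_of_ne huw]
      simp [huw]
  · rw [Function.update_of_ne huv]
    by_cases huw : u = w
    · subst huw
      rw [Function.update_self]
      simp only [if_neg huv, if_true]
      omega
    · rw [Function.update_of_ne huw]
      simp [huw, huv]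

lemma slide_sum_pebs (H : PGConfig V k) {w : V} (v : V) (c : Fin k) {c' : Fin k}
    (hc : c' ∈ H.pebs w) (S : Finset V) :
    (∑ x ∈ S, ((slideCfg H v w c c').pebs x).card) + (if w ∈ S then 1 else 0) =
      (∑ x ∈ S, (H.pebs x).card) + (if v ∈ S then 1 else 0) := by
  have h2 := Finset.sum_congr rfl (fun x (_ : x ∈ S) => slide_pebs_card H v c hc x)
  rw [Finset.sum_add_distrib, Finset.sum_add_distrib] at h2
  simpa [Finset.sum_ite_eq'] using h2

lemma undirected_slide (H : PGConfig V k) {v w : V} {c : Fin k} (c' : Fin k)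
    (he : (v, w, c) ∈ H.edges) :
    undirected (slideCfg H v w c c') = undirected H := by
  obtain ⟨t, ht⟩ := Multiset.exists_cons_of_mem he
  simp only [slideCfg, undirected, ht, Multiset.erase_cons_head, Multiset.map_cons]
  rw [Sym2.eq_swap]

lemma slide_outdeg (H : PGConfig V k) {v w : V} {c : Fin k} (c' : Fin k)
    (he : (v, w, c) ∈ H.edges) (u : V) :
    outdeg (slideCfg H v w c c') u + (if u = v then 1 else 0) =
      outdeg H u + (if u = w then 1 else 0) := by
  obtain ⟨t, ht⟩ := Multiset.exists_cons_of_mem he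
  simp only [slideCfg, outdeg, ht, Multiset.erase_cons_head, Multiset.filter_cons,
    Multiset.card_add, apply_ite Multiset.card, Multiset.card_singleton, Multiset.card_zero]
  rw [ite_flip w u, ite_flip v u]
  by_cases h1 : u = w <;> by_cases h2 : u = v <;> simp [h1, h2] <;> omega

lemma good_slide {H : PGConfig V k} {v w : V} {c c' : Fin k}
    (he : (v, w, c) ∈ H.edges) (hc : c' ∈ H.pebs w) (hG : Good k H) :
    Good k (slideCfg H v w c c') := by
  intro u
  have h1 := slide_pebs_card H v c hc u
  have h2 := slide_outdeg H c' he u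
  have h3 := hG u
  split_ifs at h1 h2 <;> omega

lemma add_pebs_card {H : PGConfig V k} {v : V} {c : Fin k} (w : V)
    (hc : c ∈ H.pebs v) (u : V) :
    ((addEdgeCfg H v w c).pebs u).card + (if u = v then 1 else 0) = (H.pebs u).card := by
  have hle : 1 ≤ (H.pebs v).card := card_pos_of_mem hc
  have hcard : ((H.pebs v).erase c).card + 1 = (H.pebs v).card := by
    rw [Multiset.card_erase_of_mem hc, Nat.pred_eq_sub_one]; omega
  simp only [addEdgeCfg]
  by_cases huv : u = v
  · subst huv; rw [Function.update_self]; simpa using hcard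
  · rw [Function.update_of_ne huv]; simp [huv]

lemma add_sum_pebs {H : PGConfig V k} {v : V} {c : Fin k} (w : V)
    (hc : c ∈ H.pebs v) (S : Finset V) :
    (∑ x ∈ S, ((addEdgeCfg H v w c).pebs x).card) + (if v ∈ S then 1 else 0) =
      ∑ x ∈ S, (H.pebs x).card := by
  have h2 := Finset.sum_congr rfl (fun x (_ : x ∈ S) => add_pebs_card w hc x)
  rw [Finset.sum_add_distrib] at h2
  simpa [Finset.sum_ite_eq'] using h2

lemma add_outdeg (H : PGConfig V k) (v w : V) (c : Fin k) (u : V) :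
    outdeg (addEdgeCfg H v w c) u = outdeg H u + (if u = v then 1 else 0) := by
  simp only [addEdgeCfg, outdeg, Multiset.filter_cons,
    Multiset.card_add, apply_ite Multiset.card, Multiset.card_singleton, Multiset.card_zero]
  rw [ite_flip v u]
  omega

lemma undirected_add (H : PGConfig V k) (v w : V) (c : Fin k) :
    undirected (addEdgeCfg H v w c) = s(v, w) ::ₘ undirected H := by
  simp [addEdgeCfg, undirected]

lemma good_add {H : PGConfig V k} {v w : V} {c : Fin k}
    (hc : c ∈ H.pebs v) (hG : Good k H) :
    Good k (addEdgeCfg H v w c) := by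
  intro u
  have h1 := add_pebs_card w hc u
  have h2 := add_outdeg H v w c u
  have h3 := hG u
  split_ifs at h1 h2 <;> omega

lemma good_step {A B : PGConfig V k} (h : Step k ℓ A B) (hG : Good k A) : Good k B := by
  cases h with
  | add v w c hpeb hc => exact good_add hc hG
  | slide v w c c' he hc => exact good_slide he hc hG

end PebbleGame
namespace PebbleGame

variable {V : Type} [DecidableEq V] {k ℓ : ℕ}

lemma spanned_undirected_card (H : PGConfig V k) (S : Finset V) :
    (spanned (undirected H) S).card =
      (H.edges.filter fun e => e.1 ∈ S ∧ e.2.1 ∈ S).card := by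
  unfold spanned undirected
  rw [Multiset.filter_map, Multiset.card_map]
  congr 1
  apply Multiset.filter_congr
  intro e _
  simp [Finset.mk_mem_sym2_iff]

lemma sum_outdeg_eq (E : Multiset (V × V × Fin k)) (S : Finset V) :
    (∑ v ∈ S, (E.filter fun e => e.1 = v).card) = (E.filter fun e => e.1 ∈ S).card := by
  induction E using Multiset.induction with
  | empty => simp
  | cons a t ih =>
    simp only [Multiset.filter_cons, Multiset.card_add, apply_ite Multiset.card,
      Multiset.card_singleton, Multiset.card_zero, Finset.sum_add_distrib, ih]
    rw [Finset.sum_ite_eq S a.1 (fun _ => 1)]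

/-- The number of edges leaving `S`. -/
noncomputable def leaving (H : PGConfig V k) (S : Finset V) : ℕ :=
  (H.edges.filter fun e => e.1 ∈ S ∧ e.2.1 ∉ S).card

lemma good_count (H : PGConfig V k) (hG : Good k H) (S : Finset V) :
    (∑ v ∈ S, (H.pebs v).card) + leaving H S + (spanned (undirected H) S).card
      = k * S.card := by
  have h1 : (∑ v ∈ S, ((H.pebs v).card + outdeg H v)) = k * S.card := by
    rw [Finset.sum_congr rfl (fun v _ => hG v)]
    simp [mul_comm]
  rw [Finset.sum_add_distrib] at h1
  have h2 : (∑ v ∈ S, outdeg H v) = (H.edges.filter fun e => e.1 ∈ S).card :=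
    sum_outdeg_eq H.edges S
  have h3 : (H.edges.filter fun e => e.1 ∈ S).card =
      (H.edges.filter fun e => e.1 ∈ S ∧ e.2.1 ∈ S).card +
      (H.edges.filter fun e => e.1 ∈ S ∧ e.2.1 ∉ S).card := by
    have := Multiset.filter_add_not (fun e : V × V × Fin k => e.2.1 ∈ S)
      (H.edges.filter fun e => e.1 ∈ S)
    rw [Multiset.filter_filter, Multiset.filter_filter] at this
    have hc := congrArg Multiset.card this
    rw [Multiset.card_add] at hc
    rw [← hc]
    congr 1
    · exact congrArg Multiset.card (Multiset.filter_congr (fun e _ => by tauto))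
    · exact congrArg Multiset.card (Multiset.filter_congr (fun e _ => by tauto))
  rw [spanned_undirected_card]
  unfold leaving
  omega

/-- The subset invariant. -/
def Inv (k ℓ : ℕ) (H : PGConfig V k) : Prop :=
  ∀ S : Finset V,
    ℓ ≤ (∑ v ∈ S, (H.pebs v).card) + leaving H S ∨ (spanned (undirected H) S).card = 0

lemma sparse_of_good_inv (H : PGConfig V k) (hG : Good k H) (hI : Inv k ℓ H) :
    Sparse k ℓ (undirected H) := by
  intro S _
  have h1 := good_count H hG S
  rcases hI S with h2 | h2
  · omega
  · omega

lemma leaving_slide (H : PGConfig V k) {v w : V} {c : Fin k} (c' : Fin k)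
    (he : (v, w, c) ∈ H.edges) (S : Finset V) :
    leaving (slideCfg H v w c c') S + (if v ∈ S ∧ w ∉ S then 1 else 0) =
      leaving H S + (if w ∈ S ∧ v ∉ S then 1 else 0) := by
  obtain ⟨t, ht⟩ := Multiset.exists_cons_of_mem he
  simp only [leaving, slideCfg, ht, Multiset.erase_cons_head, Multiset.filter_cons,
    Multiset.card_add, apply_ite Multiset.card, Multiset.card_singleton, Multiset.card_zero]
  by_cases h1 : v ∈ S <;> by_cases h2 : w ∈ S <;> simp [h1, h2] <;> omega

lemma leaving_add (H : PGConfig V k) (v w : V) (c : Fin k) (S : Finset V) :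
    leaving (addEdgeCfg H v w c) S =
      leaving H S + (if v ∈ S ∧ w ∉ S then 1 else 0) := by
  simp only [leaving, addEdgeCfg, Multiset.filter_cons,
    Multiset.card_add, apply_ite Multiset.card, Multiset.card_singleton, Multiset.card_zero]
  by_cases h1 : v ∈ S <;> by_cases h2 : w ∈ S <;> simp [h1, h2] <;> omega

lemma spanned_cons (e : Sym2 V) (E : Multiset (Sym2 V)) (S : Finset V) :
    (spanned (e ::ₘ E) S).card =
      (spanned E S).card + (if e ∈ S.sym2 then 1 else 0) := by
  simp only [spanned, Multiset.filter_cons, Multiset.card_add, apply_ite Multiset.card,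
    Multiset.card_singleton, Multiset.card_zero]
  omega

lemma inv_step {A B : PGConfig V k} (h : Step k ℓ A B) (hI : Inv k ℓ A) : Inv k ℓ B := by
  cases h with
  | add v w c hpeb hc =>
    intro S
    have hsp := spanned_cons s(v, w) (undirected A) S
    rw [← undirected_add A v w c] at hsp
    have hpc := add_sum_pebs w hc S
    have hlv := leaving_add A v w c S
    by_cases hvS : v ∈ S
    · by_cases hwS : w ∈ S
      · left
        have hsub : ({v, w} : Finset V) ⊆ S := by
          intro x hx
          simp only [Finset.mem_insert, Finset.mem_singleton] at hx
          rcases hx with rfl | rfl <;> assumption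
        have hmono : (∑ u ∈ ({v, w} : Finset V), (A.pebs u).card) ≤
            ∑ u ∈ S, (A.pebs u).card :=
          Finset.sum_le_sum_of_subset hsub
        simp [hvS, hwS] at hpc hlv
        omega
      · rcases hI S with h2 | h2
        · left
          simp [hvS, hwS] at hpc hlv
          omega
        · right
          have : s(v, w) ∉ S.sym2 := by
            rw [Finset.mk_mem_sym2_iff]; tauto
          simp only [this, if_false] at hsp
          omega
    · have : s(v, w) ∉ S.sym2 := by
        rw [Finset.mk_mem_sym2_iff]; tauto
      simp only [this, if_false] at hsp
      simp [hvS] at hpc hlv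
      rcases hI S with h2 | h2
      · left; omega
      · right; omega
  | slide v w c c' he hc =>
    intro S
    have hsp : (spanned (undirected (slideCfg A v w c c')) S).card =
        (spanned (undirected A) S).card := by
      rw [undirected_slide A c' he]
    have hpc := slide_sum_pebs A v c hc S
    have hlv := leaving_slide A c' he S
    rcases hI S with h2 | h2
    · left
      by_cases h1 : v ∈ S <;> by_cases h3 : w ∈ S <;>
        simp only [h1, h3, if_true, if_false, and_true, and_false, true_and, false_and,
          not_true, not_false_iff] at hpc hlv <;> omega
    · right; omega

lemma init_good [Fintype V] : Good k (initCfg V k) := by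
  intro v
  simp [initCfg, outdeg, Finset.card_univ]

lemma init_inv [Fintype V] : Inv k ℓ (initCfg V k) := by
  intro S
  right
  simp [initCfg, undirected, spanned]

lemma reachable_good_inv [Fintype V] {H : PGConfig V k} (h : Reachable k ℓ H) :
    Good k H ∧ Inv k ℓ H := by
  induction h with
  | refl => exact ⟨init_good, init_inv⟩
  | tail _ hstep ih => exact ⟨good_step hstep ih.1, inv_step hstep ih.2⟩

/-- Forward direction: every pebble-game graph is sparse. -/
lemma pebble_sparse [Fintype V] {E : Multiset (Sym2 V)} (h : PebbleGameGraph k ℓ E) :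
    Sparse k ℓ E := by
  obtain ⟨H, hreach, rfl⟩ := h
  obtain ⟨hG, hI⟩ := reachable_good_inv hreach
  exact sparse_of_good_inv H hG hI

end PebbleGame
namespace PebbleGame

variable {V : Type} [DecidableEq V] {k ℓ : ℕ}

/-- Directed walks of a given length in an edge multiset. -/
inductive ReachW (E : Multiset (V × V × Fin k)) : ℕ → V → V → Prop
  | refl (a : V) : ReachW E 0 a a
  | snoc {n : ℕ} {a y z : V} (h : ReachW E n a y) (c : Fin k) (hc : (y, z, c) ∈ E) :
      ReachW E (n + 1) a z

lemma ReachW.mono {E F : Multiset (V × V × Fin k)} (hEF : E ≤ F) {n : ℕ} {a z : V}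
    (h : ReachW E n a z) : ReachW F n a z := by
  induction h with
  | refl a => exact .refl a
  | snoc h c hc ih => exact .snoc ih c (Multiset.mem_of_le hEF hc)

lemma reachW_avoid {E : Multiset (V × V × Fin k)} (z : V) {n : ℕ} {a y : V}
    (h : ReachW E n a y) :
    ReachW (E.filter fun e => e.1 ≠ z) n a y ∨
      ∃ m ≤ n, ReachW (E.filter fun e => e.1 ≠ z) m a z := by
  induction h with
  | refl a => exact Or.inl (.refl a)
  | @snoc n a y' y'' h c hc ih =>
    rcases ih with ih | ⟨m, hm, hw⟩
    · by_cases hy : y' = z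
      · subst hy
        exact Or.inr ⟨n, Nat.le_succ n, ih⟩
      · exact Or.inl (.snoc ih c (Multiset.mem_filter.mpr ⟨hc, hy⟩))
    · exact Or.inr ⟨m, le_trans hm (Nat.le_succ n), hw⟩

lemma reachW_strengthen {E : Multiset (V × V × Fin k)} {z : V} {n : ℕ} {a y : V}
    (h : ReachW (E.filter fun e => e.1 ≠ z) n a y) (hy : y ≠ z) :
    ReachW (E.filter fun e => e.1 ≠ z ∧ e.2.1 ≠ z) n a y := by
  induction h with
  | refl a => exact .refl a
  | @snoc n a y' y'' h c hc ih =>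
    rcases Multiset.mem_filter.mp hc with ⟨hcE, hy'⟩
    exact .snoc (ih hy') c (Multiset.mem_filter.mpr ⟨hcE, hy', hy⟩)

lemma reachW_extract {E : Multiset (V × V × Fin k)} {n : ℕ} {a z : V}
    (h : ReachW E n a z) (haz : a ≠ z) :
    ∃ m < n, ∃ y, y ≠ z ∧ ∃ c : Fin k, (y, z, c) ∈ E ∧
      ReachW (E.filter fun e => e.1 ≠ z ∧ e.2.1 ≠ z) m a y := by
  have h0 : ∃ m ≤ n, ReachW (E.filter fun e => e.1 ≠ z) m a z := by
    rcases reachW_avoid z h with h1 | h1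
    · exact ⟨n, le_refl n, h1⟩
    · exact h1
  obtain ⟨m, hm, hw⟩ := h0
  cases hw with
  | refl => exact absurd rfl haz
  | @snoc m' a y _ h c hc =>
    rcases Multiset.mem_filter.mp hc with ⟨hcE, hy⟩
    exact ⟨m', by omega, y, hy, c, hcE, reachW_strengthen h hy⟩

lemma le_erase_of_not_mem {E : Multiset (V × V × Fin k)} {F : Multiset (V × V × Fin k)}
    {a : V × V × Fin k} (hFE : F ≤ E) (ha : a ∉ F) : F ≤ E.erase a := by
  rw [Multiset.le_iff_count]
  intro b
  by_cases hb : b = a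
  · subst hb
    simp [Multiset.count_eq_zero_of_notMem ha]
  · rw [Multiset.count_erase_of_ne hb]
    exact Multiset.le_iff_count.mp hFE b

/-- Moving one pebble to the set `S` along a directed walk. -/
lemma collect_one (S : Finset V) : ∀ n : ℕ, ∀ H : PGConfig V k, ∀ z : V, z ∉ S →
    H.pebs z ≠ 0 → (∃ a ∈ S, ReachW H.edges n a z) →
    ∃ H' : PGConfig V k, Relation.ReflTransGen (SlideRel k) H H' ∧
      undirected H' = undirected H ∧
      (∑ x ∈ S, (H'.pebs x).card) = (∑ x ∈ S, (H.pebs x).card) + 1 := by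
  intro n
  induction n using Nat.strong_induction_on with
  | _ n ih =>
    intro H z hzS hz ⟨a, haS, hw⟩
    have haz : a ≠ z := fun h => hzS (h ▸ haS)
    obtain ⟨m, hmn, y, hyz, c, hcE, hw2⟩ := reachW_extract hw haz
    obtain ⟨c', hc'⟩ := Multiset.exists_mem_of_ne_zero hz
    set H1 := slideCfg H y z c c' with hH1
    have hstep : SlideRel k H H1 := ⟨y, z, c, c', hcE, hc', rfl⟩
    have hund : undirected H1 = undirected H := undirected_slide H c' hcE
    have hsum := slide_sum_pebs H y c hc' S
    rw [if_neg hzS, ← hH1] at hsum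
    by_cases hyS : y ∈ S
    · refine ⟨H1, Relation.ReflTransGen.single hstep, hund, ?_⟩
      rw [if_pos hyS] at hsum
      omega
    · rw [if_neg hyS] at hsum
      -- the walk survives in H1
      have hle : (H.edges.filter fun e => e.1 ≠ z ∧ e.2.1 ≠ z) ≤ H1.edges := by
        have h1 : (H.edges.filter fun e => e.1 ≠ z ∧ e.2.1 ≠ z) ≤ H.edges.erase (y, z, c) := by
          apply le_erase_of_not_mem (Multiset.filter_le _ _)
          intro hmem
          rcases Multiset.mem_filter.mp hmem with ⟨-, -, h2⟩
          exact h2 rfl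
        calc (H.edges.filter fun e => e.1 ≠ z ∧ e.2.1 ≠ z)
            ≤ H.edges.erase (y, z, c) := h1
          _ ≤ (z, y, c') ::ₘ H.edges.erase (y, z, c) := Multiset.le_cons_self _ _
      have hw3 : ReachW H1.edges m a y := (hw2.mono hle)
      have hy1 : H1.pebs y ≠ 0 := by
        simp only [hH1, slideCfg, Function.update_self]
        exact Multiset.cons_ne_zero
      obtain ⟨H2, hsteps2, hund2, hsum2⟩ := ih m hmn H1 y hyS hy1 ⟨a, haS, hw3⟩
      exact ⟨H2, Relation.ReflTransGen.trans (Relation.ReflTransGen.single hstep) hsteps2,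
        hund2.trans hund, by omega⟩

end PebbleGame
namespace PebbleGame

variable {V : Type} [DecidableEq V] {k ℓ : ℕ}

lemma slideRel_good {A B : PGConfig V k} (h : SlideRel k A B) (hG : Good k A) : Good k B := by
  obtain ⟨v, w, c, c', he, hc, rfl⟩ := h
  exact good_slide he hc hG

lemma rtg_slide_good {A B : PGConfig V k} (h : Relation.ReflTransGen (SlideRel k) A B)
    (hG : Good k A) : Good k B := by
  induction h with
  | refl => exact hG
  | tail _ hstep ih => exact slideRel_good hstep ih

lemma slideRel_step {A B : PGConfig V k} (h : SlideRel k A B) : Step k ℓ A B := by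
  obtain ⟨v, w, c, c', he, hc, rfl⟩ := h
  exact Step.slide A v w c c' he hc

/-- Collecting `ℓ + 1` pebbles on the endpoints of a prospective new edge. -/
lemma collect [Fintype V] (u v : V) :
    ∀ d : ℕ, ∀ H : PGConfig V k, Good k H →
      Sparse k ℓ (s(u, v) ::ₘ undirected H) →
      ℓ + 1 ≤ (∑ x ∈ ({u, v} : Finset V), (H.pebs x).card) + d →
      ∃ H', Relation.ReflTransGen (SlideRel k) H H' ∧ undirected H' = undirected H ∧
        ℓ + 1 ≤ ∑ x ∈ ({u, v} : Finset V), (H'.pebs x).card := by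
  intro d
  induction d with
  | zero =>
    intro H _ _ hb
    exact ⟨H, .refl, rfl, by omega⟩
  | succ d ihd =>
    intro H hG hs hb
    by_cases hdone : ℓ + 1 ≤ ∑ x ∈ ({u, v} : Finset V), (H.pebs x).card
    · exact ⟨H, .refl, rfl, hdone⟩
    · set S : Finset V := {u, v} with hS
      set R : Finset V := Finset.univ.filter
        (fun z => ∃ a ∈ S, ∃ n, ReachW H.edges n a z) with hR
      have hSR : S ⊆ R := fun a ha =>
        Finset.mem_filter.mpr ⟨Finset.mem_univ a, a, ha, 0, .refl a⟩
      have hclosed : ∀ e ∈ H.edges, e.1 ∈ R → e.2.1 ∈ R := by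
        intro e he h1
        obtain ⟨-, a, haS, n, hw⟩ := Finset.mem_filter.mp h1
        exact Finset.mem_filter.mpr ⟨Finset.mem_univ _, a, haS, n + 1,
          .snoc hw e.2.2 (by exact he)⟩
      have huR : u ∈ R := hSR (by simp [hS])
      have hvR : v ∈ R := hSR (by simp [hS])
      have hsparse := hs R ⟨u, huR⟩
      have hspan : (spanned (s(u, v) ::ₘ undirected H) R).card =
          (spanned (undirected H) R).card + 1 := by
        rw [spanned_cons, if_pos (Finset.mk_mem_sym2_iff.mpr ⟨huR, hvR⟩)]
      have hleav : leaving H R = 0 := by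
        unfold leaving
        rw [Multiset.card_eq_zero, Multiset.filter_eq_nil]
        rintro e he ⟨h1, h2⟩
        exact h2 (hclosed e he h1)
      have hcount := good_count H hG R
      have hRcard : ℓ + 1 ≤ ∑ x ∈ R, (H.pebs x).card := by omega
      have hsplit : (∑ x ∈ R \ S, (H.pebs x).card) + (∑ x ∈ S, (H.pebs x).card)
          = ∑ x ∈ R, (H.pebs x).card := Finset.sum_sdiff hSR
      have hpos : (∑ x ∈ R \ S, (H.pebs x).card) ≠ 0 := by omega
      obtain ⟨z, hzRS, hzp⟩ := Finset.exists_ne_zero_of_sum_ne_zero hpos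
      have hzS : z ∉ S := (Finset.mem_sdiff.mp hzRS).2
      have hzR := (Finset.mem_sdiff.mp hzRS).1
      obtain ⟨-, a, haS, n, hw⟩ := Finset.mem_filter.mp hzR
      have hzne : H.pebs z ≠ 0 := fun h0 => hzp (by rw [h0]; simp)
      obtain ⟨H1, hst1, hund1, hsum1⟩ := collect_one S n H z hzS hzne ⟨a, haS, hw⟩
      have hG1 := rtg_slide_good hst1 hG
      obtain ⟨H2, hst2, hund2, hfin⟩ := ihd H1 hG1 (by rwa [hund1]) (by omega)
      exact ⟨H2, hst1.trans hst2, hund2.trans hund1, hfin⟩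

lemma sym2_exists (e : Sym2 V) : ∃ u v : V, e = s(u, v) :=
  Sym2.ind (fun u v => ⟨u, v, rfl⟩) e

/-- Hard direction: every sparse graph can be built by the pebble game. -/
lemma sparse_to_pebble [Fintype V] :
    ∀ E : Multiset (Sym2 V), Sparse k ℓ E →
      ∃ H : PGConfig V k, Reachable k ℓ H ∧ Good k H ∧ undirected H = E := by
  intro E
  induction E using Multiset.induction with
  | empty =>
    intro _
    exact ⟨initCfg V k, .refl, init_good, by simp [initCfg, undirected]⟩
  | cons e E ihE =>
    intro hs
    have hsE : Sparse k ℓ E := by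
      intro T hT
      calc (spanned E T).card ≤ (spanned (e ::ₘ E) T).card := by
            rw [spanned_cons]; omega
        _ ≤ k * T.card - ℓ := hs T hT
    obtain ⟨H, hreach, hG, hund⟩ := ihE hsE
    obtain ⟨u, v, rfl⟩ := sym2_exists e
    obtain ⟨H', hslides, hund', hpeb⟩ :=
      collect u v (ℓ + 1) H hG (by rw [hund]; exact hs) (by omega)
    have hreach' : Reachable k ℓ H' :=
      hreach.trans (Relation.ReflTransGen.mono (fun _ _ h => slideRel_step h) _ _ hslides)
    have hG' := rtg_slide_good hslides hG
    by_cases hu : H'.pebs u = 0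
    · have hcards : ∑ x ∈ ({u, v} : Finset V), (H'.pebs x).card ≤
          (H'.pebs u).card + (H'.pebs v).card := by
        by_cases huv : u = v
        · subst huv; simp
        · rw [Finset.sum_pair huv]
      have hu0 : (H'.pebs u).card = 0 := by rw [hu]; simp
      have hvc : (H'.pebs v).card ≠ 0 := by omega
      have hvne : H'.pebs v ≠ 0 := fun h0 => hvc (by rw [h0]; simp)
      obtain ⟨c, hcv⟩ := Multiset.exists_mem_of_ne_zero hvne
      refine ⟨addEdgeCfg H' v u c, hreach'.tail (Step.add H' v u c ?_ hcv),
        good_add hcv hG', ?_⟩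
      · rwa [show ({v, u} : Finset V) = {u, v} from Finset.pair_comm v u]
      · rw [undirected_add, hund', hund, Sym2.eq_swap]
    · obtain ⟨c, hcu⟩ := Multiset.exists_mem_of_ne_zero hu
      refine ⟨addEdgeCfg H' u v c, hreach'.tail (Step.add H' u v c hpeb hcu),
        good_add hcu hG', ?_⟩
      rw [undirected_add, hund', hund]

end PebbleGame

/-- A graph `G` is `(k,ℓ)`-sparse, where `k ≥ 1` and `0 ≤ ℓ ≤ 2k-1`,
if and only if `G` is a `(k,ℓ)`-pebble-game graph. -/
theorem sparse_iff_pebbleGameGraph {V : Type} [Fintype V] [DecidableEq V]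
    (k ℓ : ℕ) (hk : 1 ≤ k) (hℓ : ℓ ≤ 2 * k - 1) (E : Multiset (Sym2 V)) :
    Sparse k ℓ E ↔ PebbleGameGraph k ℓ E := by
  constructor
  · intro hs
    obtain ⟨H, hreach, _, hund⟩ := sparse_to_pebble E hs
    exact ⟨H, hreach, hund⟩
  · exact pebble_sparse
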